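/- Let u and v be permutations of {1,…,n} with v ≤_{LR} u in two-sided weak order. Then raj(v) ≤ raj(u), and raj(v) = raj(u) if and only if u and v have the same shape. -/

import Mathlib

open scoped Classical

noncomputable section

namespace RajRegularity

variable {n : ℕ}

/-- Maximal length of an increasing subsequence of `w(i), …, w(n)` beginning with `w(i)`:
the largest cardinality of a set `s` of positions that contains `i`, consists of positions
`≥ i`, and on which `w` is strictly increasing. -/
def lisFrom (w : Equiv.Perm (Fin n)) (i : Fin n) : ℕ :=
  (Finset.univ.filter fun s : Finset (Fin n) =>
      i ∈ s ∧ (∀ j ∈ s, i ≤ j) ∧ ∀ j ∈ s, ∀ k ∈ s, j < k → w j < w k).sup Finset.card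

/-- `rajCode w i = (n − i + 1) −` (maximal length of an increasing subsequence of
`w(i), …, w(n)` beginning with `w(i)`); here positions are 0-based, so the number of
positions `≥ i` is `n - i`. -/
def rajCode (w : Equiv.Perm (Fin n)) (i : Fin n) : ℕ :=
  (n - (i : ℕ)) - lisFrom w i

/-- The Rajchgot index `raj w = Σᵢ rajCode w i`. -/
def raj (w : Equiv.Perm (Fin n)) : ℕ := ∑ i, rajCode w i

/-- The number of inversions of `w`: pairs of positions `i < j` with `w i > w j`. -/
def invNum (w : Equiv.Perm (Fin n)) : ℕ :=
  (Finset.univ.filter fun p : Fin n × Fin n => p.1 < p.2 ∧ w p.2 < w p.1).card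

/-- The `i`-th entry of the inv code: `ℓ_i(w) = #{ j : i < j, w j < w i }`. -/
def ellCode (w : Equiv.Perm (Fin n)) (i : Fin n) : ℕ :=
  (Finset.univ.filter fun j : Fin n => i < j ∧ w j < w i).card

/-- The set of descent positions of `w` (0-based position `j` with `w j > w (j+1)`). -/
def descents (w : Equiv.Perm (Fin n)) : Finset (Fin n) :=
  Finset.univ.filter fun j : Fin n =>
    if h : (j : ℕ) + 1 < n then w ⟨(j : ℕ) + 1, h⟩ < w j else False

/-- The major index: the sum of the (1-based) descent positions of `w`. -/
def maj (w : Equiv.Perm (Fin n)) : ℕ := ∑ j ∈ descents w, ((j : ℕ) + 1)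

/-- `mCode w i`: the number of descents of `w` at positions `≥ i`. -/
def mCode (w : Equiv.Perm (Fin n)) (i : Fin n) : ℕ :=
  ((descents w).filter fun j => i ≤ j).card

/-- `w` is dominant iff it avoids the pattern 132. -/
def Dominant (w : Equiv.Perm (Fin n)) : Prop :=
  ¬ ∃ i j k : Fin n, i < j ∧ j < k ∧ w i < w k ∧ w k < w j

/-- `w` is fireworks iff there are no positions `i < j` with `w j < w (j+1) < w i`. -/
def Fireworks (w : Equiv.Perm (Fin n)) : Prop :=
  ¬ ∃ (i j : Fin n) (h : (j : ℕ) + 1 < n),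
      i < j ∧ w j < w ⟨(j : ℕ) + 1, h⟩ ∧ w ⟨(j : ℕ) + 1, h⟩ < w i

/-- `w` is inverse fireworks iff `w⁻¹` is fireworks. -/
def InvFireworks (w : Equiv.Perm (Fin n)) : Prop := Fireworks w⁻¹

/-- `w` is a valley permutation: for some `a`, it is strictly decreasing on positions `≤ a`
and strictly increasing on positions `≥ a`. -/
def Valley (w : Equiv.Perm (Fin n)) : Prop :=
  ∃ a : ℕ, (∀ i j : Fin n, i < j → (j : ℕ) ≤ a → w j < w i) ∧
    ∀ i j : Fin n, a ≤ (i : ℕ) → i < j → w i < w j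

/-- `eps w i` is the (1-based) blob index `ε_i(w) = i + r_i(w)`. -/
def eps (w : Equiv.Perm (Fin n)) (i : Fin n) : ℕ := (i : ℕ) + 1 + rajCode w i

/-- The shape of `w`: `α_k(w) = #{ i : ε_i(w) = k }` (here `k : Fin n` stands for the
1-based index `k + 1`). -/
def shape (w : Equiv.Perm (Fin n)) : Fin n → ℕ := fun k =>
  (Finset.univ.filter fun i : Fin n => eps w i = (k : ℕ) + 1).card

/-- Dominance order on shapes: `α ⪰ β` iff every tail sum of `α` is at least the
corresponding tail sum of `β`. -/
def Dominates (α β : Fin n → ℕ) : Prop :=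
  ∀ m : Fin n,
    ∑ k ∈ Finset.univ.filter (fun k : Fin n => m ≤ k), β k ≤
      ∑ k ∈ Finset.univ.filter (fun k : Fin n => m ≤ k), α k

/-- Right weak order: `u ≤_R w` iff `w = u * v` length-additively. -/
def leR (u w : Equiv.Perm (Fin n)) : Prop :=
  ∃ v : Equiv.Perm (Fin n), w = u * v ∧ invNum w = invNum u + invNum v

/-- Left weak order: `u ≤_L w` iff `w = v * u` length-additively. -/
def leL (u w : Equiv.Perm (Fin n)) : Prop :=
  ∃ v : Equiv.Perm (Fin n), w = v * u ∧ invNum w = invNum v + invNum u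

/-- Two-sided weak order: the transitive closure of the union of left and right weak
orders (both are reflexive, so we may use the reflexive-transitive closure). -/
def leLR (u w : Equiv.Perm (Fin n)) : Prop :=
  Relation.ReflTransGen (fun a b : Equiv.Perm (Fin n) => leL a b ∨ leR a b) u w

/-- The maximum of the block of the set partition `π(w)` containing the value `v`;
the block of `v` is `{ v' : ε_{w⁻¹ v'}(w) = ε_{w⁻¹ v}(w) }`. -/
def blockMax (w : Equiv.Perm (Fin n)) (v : Fin n) : ℕ :=
  ((Finset.univ.filter fun v' : Fin n => eps w (w⁻¹ v') = eps w (w⁻¹ v)).max'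
      ⟨v, Finset.mem_filter.mpr ⟨Finset.mem_univ v, rfl⟩⟩).val

/-- The fireworks map `Φ`: the one-line word of `Φ w` lists the blocks of `π(w)` in
increasing order of their maxima, each block written in decreasing order.  Equivalently,
`Φ w` sorts the values by the key (max of block, value reversed), lexicographically. -/
def Phi (w : Equiv.Perm (Fin n)) : Equiv.Perm (Fin n) :=
  Tuple.sort fun v : Fin n => n * blockMax w v + (n - 1 - (v : ℕ))

/-- The inverse fireworks map `Φ_inv w = Φ(w⁻¹)⁻¹`. -/
def PhiInv (w : Equiv.Perm (Fin n)) : Equiv.Perm (Fin n) := (Phi w⁻¹)⁻¹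

/-- Partial sums of a sequence of block sizes. -/
def psum (a : ℕ → ℕ) (m : ℕ) : ℕ := ∑ j ∈ Finset.range m, a j

/-- The index of the block (interval `[psum a m, psum a (m+1))`) containing the value `v`. -/
def blockIdx (n : ℕ) (a : ℕ → ℕ) (v : Fin n) : ℕ :=
  ((Finset.range n).filter fun m => psum a (m + 1) ≤ (v : ℕ)).card

/-- The layered permutation with block sizes `a 0, a 1, …`: it reverses each of the
consecutive intervals `[psum a m, psum a (m+1))` of `{0, …, n-1}`.  Equivalently, its
one-line word sorts the values by (block index, value reversed) lexicographically. -/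
def layered (n : ℕ) (a : ℕ → ℕ) : Equiv.Perm (Fin n) :=
  Tuple.sort fun v : Fin n => n * blockIdx n a v + (n - 1 - (v : ℕ))

/-- The layered permutation `e_α` associated to a shape `α : Fin n → ℕ`. -/
def eOf (α : Fin n → ℕ) : Equiv.Perm (Fin n) :=
  layered n fun m => if h : m < n then α ⟨m, h⟩ else 0

/-! ### Auxiliary lemmas for Statement 11 -/

section Aux11

lemma le_lisFrom (w : Equiv.Perm (Fin n)) (i : Fin n) (s : Finset (Fin n))
    (h1 : i ∈ s) (h2 : ∀ j ∈ s, i ≤ j)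
    (h3 : ∀ j ∈ s, ∀ k ∈ s, j < k → w j < w k) : s.card ≤ lisFrom w i :=
  Finset.le_sup (f := Finset.card)
    (Finset.mem_filter.2 ⟨Finset.mem_univ s, h1, h2, h3⟩)

lemma lisFrom_le (w : Equiv.Perm (Fin n)) (i : Fin n) {m : ℕ}
    (H : ∀ s : Finset (Fin n), i ∈ s → (∀ j ∈ s, i ≤ j) →
      (∀ j ∈ s, ∀ k ∈ s, j < k → w j < w k) → s.card ≤ m) : lisFrom w i ≤ m := by
  refine Finset.sup_le ?_
  intro s hs
  rw [Finset.mem_filter] at hs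
  exact H s hs.2.1 hs.2.2.1 hs.2.2.2

lemma one_le_lisFrom (w : Equiv.Perm (Fin n)) (i : Fin n) : 1 ≤ lisFrom w i := by
  have := le_lisFrom w i {i} (by simp) (by simp) (by simp)
  simpa using this

lemma lisFrom_le_card (w : Equiv.Perm (Fin n)) (i : Fin n) : lisFrom w i ≤ n - (i : ℕ) := by
  apply lisFrom_le
  intro s h1 h2 _
  have hsub : s ⊆ Finset.Ici i := fun j hj => Finset.mem_Ici.2 (h2 j hj)
  calc s.card ≤ (Finset.Ici i).card := Finset.card_le_card hsub
    _ = n - (i : ℕ) := Fin.card_Ici i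

lemma eps_le (w : Equiv.Perm (Fin n)) (i : Fin n) : eps w i ≤ n := by
  have h1 := one_le_lisFrom w i
  have h2 := i.is_lt
  have h3 := lisFrom_le_card w i
  unfold eps rajCode
  omega

lemma one_le_eps (w : Equiv.Perm (Fin n)) (i : Fin n) : 1 ≤ eps w i := by
  unfold eps; omega

lemma sum_eps (w : Equiv.Perm (Fin n)) :
    ∑ i, eps w i = ∑ k : Fin n, ((k : ℕ) + 1) * shape w k := by
  have hκ : ∀ i : Fin n, eps w i - 1 < n := fun i => by
    have := eps_le w i; have := one_le_eps w i; omega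
  set κ : Fin n → Fin n := fun i => ⟨eps w i - 1, hκ i⟩ with hκdef
  rw [← Finset.sum_fiberwise_of_maps_to (g := κ) (fun x _ => Finset.mem_univ (κ x)) (eps w)]
  refine Finset.sum_congr rfl fun k _ => ?_
  have hfib : (Finset.univ.filter fun i => κ i = k) =
      (Finset.univ.filter fun i : Fin n => eps w i = (k : ℕ) + 1) := by
    ext i
    simp only [Finset.mem_filter, Finset.mem_univ, true_and, hκdef, Fin.ext_iff]
    have := one_le_eps w i
    constructor <;> intro h <;> omega
  rw [hfib]
  have : ∀ i ∈ (Finset.univ.filter fun i : Fin n => eps w i = (k : ℕ) + 1),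
      eps w i = (k : ℕ) + 1 := fun i hi => (Finset.mem_filter.1 hi).2
  rw [Finset.sum_congr rfl this, Finset.sum_const, shape, smul_eq_mul, mul_comm]

lemma raj_add_eq (w : Equiv.Perm (Fin n)) :
    (∑ i : Fin n, ((i : ℕ) + 1)) + raj w = ∑ i, eps w i := by
  unfold raj eps
  rw [← Finset.sum_add_distrib]

lemma raj_eq_of_shape_eq {u v : Equiv.Perm (Fin n)} (h : shape u = shape v) :
    raj u = raj v := by
  have h1 := raj_add_eq u
  have h2 := raj_add_eq v
  rw [sum_eps u, sum_eps v, h] at *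
  omega

lemma invNum_inv (w : Equiv.Perm (Fin n)) : invNum w⁻¹ = invNum w := by
  unfold invNum
  refine Finset.card_bij' (fun p _ => (w⁻¹ p.2, w⁻¹ p.1)) (fun q _ => (w q.2, w q.1))
    ?_ ?_ ?_ ?_
  · intro p hp
    rw [Finset.mem_filter] at hp ⊢
    refine ⟨Finset.mem_univ _, hp.2.2, ?_⟩
    simpa using hp.2.1
  · intro q hq
    rw [Finset.mem_filter] at hq ⊢
    refine ⟨Finset.mem_univ _, hq.2.2, ?_⟩
    simpa using hq.2.1
  · intro p _; simp
  · intro q _; simp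

lemma swap_adj_lt {k k' : Fin n} (hkk : (k' : ℕ) = (k : ℕ) + 1) {a b : Fin n}
    (hab : a < b) (h : ¬(a = k ∧ b = k')) :
    Equiv.swap k k' a < Equiv.swap k k' b := by
  have hvne : ∀ x y : Fin n, x ≠ y → (x : ℕ) ≠ (y : ℕ) := fun x y hxy hc => hxy (Fin.ext hc)
  rw [Fin.lt_def] at hab
  rcases eq_or_ne a k with rfl | hak
  · have hbk' : b ≠ k' := fun hb => h ⟨rfl, hb⟩
    have hbk : b ≠ a := fun hb => by rw [hb] at hab; exact lt_irrefl _ hab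
    rw [Equiv.swap_apply_left, Equiv.swap_apply_of_ne_of_ne hbk hbk', Fin.lt_def]
    have := hvne b k' hbk'
    omega
  rcases eq_or_ne a k' with rfl | hak'
  · have hbk : b ≠ k := fun hb => by
      rw [hb] at hab; omega
    have hbk' : b ≠ a := fun hb => by rw [hb] at hab; exact lt_irrefl _ hab
    rw [Equiv.swap_apply_right, Equiv.swap_apply_of_ne_of_ne hbk hbk', Fin.lt_def]
    have := hvne b k hbk
    omega
  rcases eq_or_ne b k with rfl | hbk
  · rw [Equiv.swap_apply_of_ne_of_ne hak hak', Equiv.swap_apply_left, Fin.lt_def]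
    omega
  rcases eq_or_ne b k' with rfl | hbk'
  · rw [Equiv.swap_apply_of_ne_of_ne hak hak', Equiv.swap_apply_right, Fin.lt_def]
    have := hvne a k hak
    omega
  · rw [Equiv.swap_apply_of_ne_of_ne hak hak', Equiv.swap_apply_of_ne_of_ne hbk hbk',
      Fin.lt_def]
    exact hab

lemma invNum_mul_swap {k k' : Fin n} (hkk : (k' : ℕ) = (k : ℕ) + 1) (w : Equiv.Perm (Fin n))
    (h : w k < w k') :
    invNum (w * Equiv.swap k k') = invNum w + 1 := by
  set σ := Equiv.swap k k' with hσ
  have hkk' : k < k' := by rw [Fin.lt_def]; omega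
  have hAeq : (Finset.univ.filter fun p : Fin n × Fin n =>
        p.1 < p.2 ∧ (w * σ) p.2 < (w * σ) p.1) =
      insert (k, k') ((Finset.univ.filter fun p : Fin n × Fin n =>
        p.1 < p.2 ∧ w p.2 < w p.1).image fun p => (σ p.1, σ p.2)) := by
    ext ⟨a, b⟩
    simp only [Finset.mem_filter, Finset.mem_univ, true_and, Finset.mem_insert,
      Finset.mem_image, Prod.mk.injEq, Prod.exists]
    simp only [Equiv.Perm.mul_apply]
    constructor
    · rintro ⟨hab, hw⟩
      by_cases hsp : a = k ∧ b = k'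
      · exact Or.inl ⟨hsp.1, hsp.2⟩
      · exact Or.inr ⟨σ a, σ b, ⟨swap_adj_lt hkk hab hsp, hw⟩,
          Equiv.swap_apply_self _ _ _, Equiv.swap_apply_self _ _ _⟩
    · rintro (⟨ha, hb⟩ | ⟨x, y, ⟨hxy, hw⟩, hx, hy⟩)
      · subst ha; subst hb
        refine ⟨hkk', ?_⟩
        rw [Equiv.swap_apply_left, Equiv.swap_apply_right]
        exact h
      · have hxx : x = σ a := by
          apply σ.injective; rw [hx, Equiv.swap_apply_self]
        have hyy : y = σ b := by
          apply σ.injective; rw [hy, Equiv.swap_apply_self]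
        subst hxx; subst hyy
        have hab : a < b := by
          rcases lt_trichotomy a b with h' | h' | h'
          · exact h'
          · rw [h'] at hxy; exact absurd hxy (lt_irrefl _)
          · by_cases hsp2 : b = k ∧ a = k'
            · obtain ⟨rfl, rfl⟩ := hsp2
              rw [Equiv.swap_apply_left, Equiv.swap_apply_right] at hw
              exact absurd hw (asymm h)
            · exact absurd (swap_adj_lt hkk h' hsp2) (asymm hxy)
        exact ⟨hab, hw⟩
  have hnotmem : (k, k') ∉ ((Finset.univ.filter fun p : Fin n × Fin n =>
      p.1 < p.2 ∧ w p.2 < w p.1).image fun p => (σ p.1, σ p.2)) := by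
    simp only [Finset.mem_image, Finset.mem_filter, Finset.mem_univ, true_and,
      Prod.mk.injEq, Prod.exists, not_exists]
    rintro x y ⟨⟨hxy, hw⟩, hx, hy⟩
    have hxx : x = k' := by
      apply σ.injective; rw [hx, Equiv.swap_apply_right]
    have hyy : y = k := by
      apply σ.injective; rw [hy, Equiv.swap_apply_left]
    subst hxx; subst hyy
    exact absurd hxy (asymm hkk')
  have hinj : Set.InjOn (fun p : Fin n × Fin n => (σ p.1, σ p.2))
      ((Finset.univ.filter fun p : Fin n × Fin n => p.1 < p.2 ∧ w p.2 < w p.1) : Set _) := by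
    intro p _ q _ hpq
    simp only [Prod.mk.injEq] at hpq
    exact Prod.ext (σ.injective hpq.1) (σ.injective hpq.2)
  unfold invNum
  rw [hAeq, Finset.card_insert_of_notMem hnotmem, Finset.card_image_of_injOn hinj]

lemma invNum_mul_swap' {k k' : Fin n} (hkk : (k' : ℕ) = (k : ℕ) + 1) (w : Equiv.Perm (Fin n))
    (h : w k' < w k) :
    invNum (w * Equiv.swap k k') + 1 = invNum w := by
  have h2 : (w * Equiv.swap k k') k < (w * Equiv.swap k k') k' := by
    simp only [Equiv.Perm.mul_apply, Equiv.swap_apply_left, Equiv.swap_apply_right]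
    exact h
  have := invNum_mul_swap hkk (w * Equiv.swap k k') h2
  rw [mul_assoc, Equiv.swap_mul_self, mul_one] at this
  omega

lemma invNum_mul_le (a b : Equiv.Perm (Fin n)) : invNum (a * b) ≤ invNum a + invNum b := by
  unfold invNum
  set s := Finset.univ.filter fun p : Fin n × Fin n => p.1 < p.2 ∧ (a * b) p.2 < (a * b) p.1
    with hs
  set P : Fin n × Fin n → Prop := fun p => b p.2 < b p.1 with hP
  have hsplit : s.filter P ∪ s.filter (fun p => ¬ P p) = s :=
    Finset.filter_union_filter_not_eq P s
  have hle : s.card ≤ (s.filter P).card + (s.filter fun p => ¬ P p).card := by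
    calc s.card = (s.filter P ∪ s.filter (fun p => ¬ P p)).card := by rw [hsplit]
      _ ≤ _ := Finset.card_union_le _ _
  have h1 : (s.filter P).card ≤
      (Finset.univ.filter fun p : Fin n × Fin n => p.1 < p.2 ∧ b p.2 < b p.1).card := by
    apply Finset.card_le_card
    intro p hp
    simp only [hs, hP, Finset.mem_filter, Finset.mem_univ, true_and] at hp ⊢
    exact ⟨hp.1.1, hp.2⟩
  have h2 : (s.filter fun p => ¬ P p).card ≤
      (Finset.univ.filter fun p : Fin n × Fin n => p.1 < p.2 ∧ a p.2 < a p.1).card := by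
    apply Finset.card_le_card_of_injOn (fun p => (b p.1, b p.2))
    · intro p hp
      simp only [hs, hP, Finset.mem_coe, Finset.mem_filter, Finset.mem_univ, true_and] at hp ⊢
      simp only [Equiv.Perm.mul_apply] at hp
      refine ⟨?_, hp.1.2⟩
      rcases lt_trichotomy (b p.1) (b p.2) with h' | h' | h'
      · exact h'
      · exact absurd (b.injective h') (ne_of_lt hp.1.1)
      · exact absurd h' hp.2
    · intro p _ q _ hpq
      simp only [Prod.mk.injEq] at hpq
      exact Prod.ext (b.injective hpq.1) (b.injective hpq.2)
  omega

lemma exists_descent (w : Equiv.Perm (Fin n)) (hw : w ≠ 1) :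
    ∃ (k : Fin n) (hk : (k : ℕ) + 1 < n), w ⟨(k : ℕ) + 1, hk⟩ < w k := by
  by_contra hc
  push_neg at hc
  apply hw
  have hmono : ∀ k : Fin n, ∀ hk : (k : ℕ) + 1 < n, w k < w ⟨(k : ℕ) + 1, hk⟩ := by
    intro k hk
    have h1 := hc k hk
    rcases lt_or_eq_of_le h1 with h' | h'
    · exact h'
    · exfalso
      have h2 : k = ⟨(k : ℕ) + 1, hk⟩ := w.injective h'
      have := congrArg Fin.val h2
      simp at this
  have hsm : StrictMono w := by
    cases n with
    | zero => intro a; exact absurd a.is_lt (Nat.not_lt_zero _)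
    | succ m =>
      rw [Fin.strictMono_iff_lt_succ]
      intro i
      have hk : ((i.castSucc : Fin (m+1)) : ℕ) + 1 < m + 1 := by
        simpa using Nat.succ_lt_succ i.is_lt
      have h := hmono i.castSucc hk
      have he : (⟨((i.castSucc : Fin (m+1)) : ℕ) + 1, hk⟩ : Fin (m+1)) = i.succ := by
        ext; simp
      rwa [he] at h
  have hid : ⇑w = id := by
    have hwf : WellFoundedLT (Fin n) := inferInstance
    refine (hsm.range_inj strictMono_id).1 ?_
    rw [Set.range_id]
    exact Set.range_eq_univ.2 w.surjective
  exact Equiv.ext fun x => by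
    rw [Equiv.Perm.one_apply]; exact congrFun hid x

lemma eq_one_of_invNum_eq_zero (w : Equiv.Perm (Fin n)) (h : invNum w = 0) : w = 1 := by
  by_contra hw
  obtain ⟨k, hk, hd⟩ := exists_descent w hw
  have hmem : (k, (⟨(k : ℕ) + 1, hk⟩ : Fin n)) ∈
      Finset.univ.filter fun p : Fin n × Fin n => p.1 < p.2 ∧ w p.2 < w p.1 := by
    simp only [Finset.mem_filter, Finset.mem_univ, true_and]
    exact ⟨by rw [Fin.lt_def]; exact Nat.lt_succ_self _, hd⟩
  unfold invNum at h
  rw [Finset.card_eq_zero] at h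
  rw [h] at hmem
  exact absurd hmem (Finset.notMem_empty _)

/-! ### Transport of increasing-subsequence witnesses under an adjacent swap -/

lemma witness_map {w w' : Equiv.Perm (Fin n)} {k k' : Fin n} (hkk : (k' : ℕ) = (k : ℕ) + 1)
    (hw : ∀ m, w' m = w (Equiv.swap k k' m)) {i i' : Fin n}
    (hii : Equiv.swap k k' i = i') {s : Finset (Fin n)}
    (h1 : i ∈ s) (h3 : ∀ j ∈ s, ∀ l ∈ s, j < l → w' j < w' l)
    (hno : ¬(k ∈ s ∧ k' ∈ s)) (hge : ∀ m ∈ s, i' ≤ Equiv.swap k k' m) :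
    ∃ t : Finset (Fin n), i' ∈ t ∧ (∀ j ∈ t, i' ≤ j) ∧
      (∀ j ∈ t, ∀ l ∈ t, j < l → w j < w l) ∧ t.card = s.card := by
  set σ := Equiv.swap k k' with hσ
  have hmono : ∀ m1 ∈ s, ∀ m2 ∈ s, m1 < m2 → σ m1 < σ m2 := by
    intro m1 hm1 m2 hm2 hlt
    refine swap_adj_lt hkk hlt ?_
    rintro ⟨rfl, rfl⟩
    exact hno ⟨hm1, hm2⟩
  refine ⟨s.image fun m => σ m, ?_, ?_, ?_, ?_⟩
  · exact Finset.mem_image.2 ⟨i, h1, hii⟩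
  · intro j hj
    obtain ⟨m, hm, rfl⟩ := Finset.mem_image.1 hj
    exact hge m hm
  · intro j hj l hl hjl
    obtain ⟨m1, hm1, rfl⟩ := Finset.mem_image.1 hj
    obtain ⟨m2, hm2, rfl⟩ := Finset.mem_image.1 hl
    have hm12 : m1 < m2 := by
      rcases lt_trichotomy m1 m2 with h' | h' | h'
      · exact h'
      · rw [h'] at hjl; exact absurd hjl (lt_irrefl _)
      · exact absurd (hmono m2 hm2 m1 hm1 h') (asymm hjl)
    have := h3 m1 hm1 m2 hm2 hm12
    rwa [hw m1, hw m2] at this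
  · exact Finset.card_image_of_injOn fun a _ b _ hab => σ.injective hab

end Aux11

section Covers

lemma no_both {v : Equiv.Perm (Fin n)} {k k' : Fin n} (hkk : (k' : ℕ) = (k : ℕ) + 1)
    (hv : v k < v k') {s : Finset (Fin n)}
    (h3 : ∀ j ∈ s, ∀ l ∈ s, j < l → (v * Equiv.swap k k') j < (v * Equiv.swap k k') l) :
    ¬(k ∈ s ∧ k' ∈ s) := by
  rintro ⟨hks, hk's⟩
  have hlt : k < k' := by rw [Fin.lt_def]; omega
  have h := h3 k hks k' hk's hlt
  rw [Equiv.Perm.mul_apply, Equiv.Perm.mul_apply, Equiv.swap_apply_left,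
    Equiv.swap_apply_right] at h
  exact absurd h (asymm hv)

lemma vne {x y : Fin n} (h : x ≠ y) : (x : ℕ) ≠ (y : ℕ) := fun hc => h (Fin.ext hc)

lemma lisFrom_right_le {v : Equiv.Perm (Fin n)} {k k' : Fin n}
    (hkk : (k' : ℕ) = (k : ℕ) + 1) (hv : v k < v k') (i : Fin n)
    (hik : i ≠ k) (hik' : i ≠ k') :
    lisFrom (v * Equiv.swap k k') i ≤ lisFrom v i := by
  apply lisFrom_le
  intro s h1 h2 h3
  have hno := no_both hkk hv h3
  have hge : ∀ m ∈ s, i ≤ Equiv.swap k k' m := by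
    intro m hm
    have him := h2 m hm
    rcases eq_or_ne m k with rfl | hmk
    · rw [Equiv.swap_apply_left, Fin.le_def]
      rw [Fin.le_def] at him; omega
    rcases eq_or_ne m k' with rfl | hmk'
    · rw [Equiv.swap_apply_right, Fin.le_def]
      rw [Fin.le_def] at him
      have := vne hik'; omega
    · rwa [Equiv.swap_apply_of_ne_of_ne hmk hmk']
  obtain ⟨t, t1, t2, t3, tc⟩ := witness_map hkk (fun m => Equiv.Perm.mul_apply _ _ _)
    (Equiv.swap_apply_of_ne_of_ne hik hik') h1 h3 hno hge
  rw [← tc]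
  exact le_lisFrom v i t t1 t2 t3

lemma lisFrom_right_k {v : Equiv.Perm (Fin n)} {k k' : Fin n}
    (hkk : (k' : ℕ) = (k : ℕ) + 1) (hv : v k < v k') :
    lisFrom (v * Equiv.swap k k') k = lisFrom v k' := by
  apply le_antisymm
  · apply lisFrom_le
    intro s h1 h2 h3
    have hno := no_both hkk hv h3
    have hge : ∀ m ∈ s, k' ≤ Equiv.swap k k' m := by
      intro m hm
      have him := h2 m hm
      rcases eq_or_ne m k with rfl | hmk
      · rw [Equiv.swap_apply_left]
      have hmk' : m ≠ k' := fun hc => hno ⟨h1, hc ▸ hm⟩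
      rw [Equiv.swap_apply_of_ne_of_ne hmk hmk', Fin.le_def]
      rw [Fin.le_def] at him
      have := vne hmk; omega
    obtain ⟨t, t1, t2, t3, tc⟩ := witness_map hkk (fun m => Equiv.Perm.mul_apply _ _ _)
      (Equiv.swap_apply_left k k') h1 h3 hno hge
    rw [← tc]
    exact le_lisFrom v k' t t1 t2 t3
  · apply lisFrom_le
    intro s h1 h2 h3
    have hks : k ∉ s := fun hc => by
      have := h2 k hc; rw [Fin.le_def] at this; omega
    have hno : ¬(k ∈ s ∧ k' ∈ s) := fun hc => hks hc.1
    have hge : ∀ m ∈ s, k ≤ Equiv.swap k k' m := by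
      intro m hm
      have him := h2 m hm
      rcases eq_or_ne m k' with rfl | hmk'
      · rw [Equiv.swap_apply_right]
      have hmk : m ≠ k := fun hc => hks (hc ▸ hm)
      rw [Equiv.swap_apply_of_ne_of_ne hmk hmk', Fin.le_def]
      rw [Fin.le_def] at him; omega
    have hw' : ∀ m, v m = (v * Equiv.swap k k') (Equiv.swap k k' m) := fun m => by
      rw [Equiv.Perm.mul_apply, Equiv.swap_apply_self]
    obtain ⟨t, t1, t2, t3, tc⟩ := witness_map hkk hw'
      (Equiv.swap_apply_right k k') h1 h3 hno hge
    rw [← tc]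
    exact le_lisFrom _ k t t1 t2 t3

lemma lisFrom_right_k' {v : Equiv.Perm (Fin n)} {k k' : Fin n}
    (hkk : (k' : ℕ) = (k : ℕ) + 1) (hv : v k < v k') :
    lisFrom (v * Equiv.swap k k') k' ≤ lisFrom v k := by
  apply lisFrom_le
  intro s h1 h2 h3
  have hks : k ∉ s := fun hc => by
    have := h2 k hc; rw [Fin.le_def] at this; omega
  have hno : ¬(k ∈ s ∧ k' ∈ s) := fun hc => hks hc.1
  have hge : ∀ m ∈ s, k ≤ Equiv.swap k k' m := by
    intro m hm
    have him := h2 m hm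
    rcases eq_or_ne m k' with rfl | hmk'
    · rw [Equiv.swap_apply_right]
    have hmk : m ≠ k := fun hc => hks (hc ▸ hm)
    rw [Equiv.swap_apply_of_ne_of_ne hmk hmk', Fin.le_def]
    rw [Fin.le_def] at him; omega
  obtain ⟨t, t1, t2, t3, tc⟩ := witness_map hkk (fun m => Equiv.Perm.mul_apply _ _ _)
    (Equiv.swap_apply_right k k') h1 h3 hno hge
  rw [← tc]
  exact le_lisFrom v k t t1 t2 t3

lemma lisFrom_right_k5 {v : Equiv.Perm (Fin n)} {k k' : Fin n}
    (hkk : (k' : ℕ) = (k : ℕ) + 1) (hv : v k < v k') :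
    lisFrom v k ≤ lisFrom (v * Equiv.swap k k') k' + 1 := by
  apply lisFrom_le
  intro s h1 h2 h3
  set u := v * Equiv.swap k k' with hu
  have hkne : k ≠ k' := fun hc => by have := congrArg Fin.val hc; omega
  by_cases hk's : k' ∈ s
  · -- drop position k
    have hcard : 1 ≤ s.card := Finset.card_pos.2 ⟨k, h1⟩
    have h4 : (s.erase k).card + 1 = s.card := by
      rw [Finset.card_erase_of_mem h1]; omega
    have ht : (s.erase k).card ≤ lisFrom u k' := by
      apply le_lisFrom u k' (s.erase k)
      · exact Finset.mem_erase.2 ⟨hkne.symm, hk's⟩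
      · intro j hj
        obtain ⟨hjk, hjs⟩ := Finset.mem_erase.1 hj
        have := h2 j hjs
        rw [Fin.le_def] at this ⊢
        have := vne hjk; omega
      · intro j hj l hl hjl
        obtain ⟨hjk, hjs⟩ := Finset.mem_erase.1 hj
        obtain ⟨hlk, hls⟩ := Finset.mem_erase.1 hl
        have hjk' : k' ≤ j := by
          have := h2 j hjs
          rw [Fin.le_def] at this ⊢
          have := vne hjk; omega
        have hlk' : l ≠ k' := by
          intro hc; subst hc
          exact absurd hjl (not_lt.2 hjk')
        rcases eq_or_ne j k' with rfl | hjne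
        · rw [hu, Equiv.Perm.mul_apply, Equiv.Perm.mul_apply, Equiv.swap_apply_right,
            Equiv.swap_apply_of_ne_of_ne hlk hlk']
          refine h3 k h1 l hls ?_
          have := h2 j hjs
          rw [Fin.lt_def] at hjl ⊢
          omega
        · rw [hu, Equiv.Perm.mul_apply, Equiv.Perm.mul_apply,
            Equiv.swap_apply_of_ne_of_ne hjk hjne,
            Equiv.swap_apply_of_ne_of_ne hlk hlk']
          exact h3 j hjs l hls hjl
    omega
  · have hno : ¬(k ∈ s ∧ k' ∈ s) := fun hc => hk's hc.2
    have hge : ∀ m ∈ s, k' ≤ Equiv.swap k k' m := by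
      intro m hm
      have him := h2 m hm
      rcases eq_or_ne m k with rfl | hmk
      · rw [Equiv.swap_apply_left]
      have hmk' : m ≠ k' := fun hc => hk's (hc ▸ hm)
      rw [Equiv.swap_apply_of_ne_of_ne hmk hmk', Fin.le_def]
      rw [Fin.le_def] at him
      have := vne hmk; omega
    have hw' : ∀ m, v m = u (Equiv.swap k k' m) := fun m => by
      rw [hu, Equiv.Perm.mul_apply, Equiv.swap_apply_self]
    obtain ⟨t, t1, t2, t3, tc⟩ := witness_map hkk hw'
      (Equiv.swap_apply_left k k') h1 h3 hno hge
    have := le_lisFrom u k' t t1 t2 t3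
    omega

/-- combined monotonicity/rigidity statement -/
def Good (a b : Equiv.Perm (Fin n)) : Prop :=
  raj a ≤ raj b ∧ (raj a = raj b → shape a = shape b)

lemma good_refl (a : Equiv.Perm (Fin n)) : Good a a := ⟨le_rfl, fun _ => rfl⟩

lemma good_trans {a b c : Equiv.Perm (Fin n)} (h1 : Good a b) (h2 : Good b c) :
    Good a c := by
  refine ⟨le_trans h1.1 h2.1, fun heq => ?_⟩
  have e1 : raj a = raj b := by have := h1.1; have := h2.1; omega
  have e2 : raj b = raj c := by have := h1.1; have := h2.1; omega
  rw [h1.2 e1, h2.2 e2]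

lemma shape_eq_of_eps {u v : Equiv.Perm (Fin n)} (σ : Equiv.Perm (Fin n))
    (h : ∀ i, eps u i = eps v (σ i)) : shape u = shape v := by
  funext c
  unfold shape
  refine Finset.card_bij' (fun i _ => σ i) (fun j _ => σ⁻¹ j) ?_ ?_ ?_ ?_
  · intro i hi
    rw [Finset.mem_filter] at hi ⊢
    exact ⟨Finset.mem_univ _, by rw [← h i]; exact hi.2⟩
  · intro j hj
    rw [Finset.mem_filter] at hj ⊢
    refine ⟨Finset.mem_univ _, ?_⟩
    rw [h (σ⁻¹ j), show σ (σ⁻¹ j) = j by simp]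
    exact hj.2
  · intro i _; simp
  · intro j _; simp

lemma good_right {v : Equiv.Perm (Fin n)} {k k' : Fin n}
    (hkk : (k' : ℕ) = (k : ℕ) + 1) (hv : v k < v k') :
    Good v (v * Equiv.swap k k') := by
  set u := v * Equiv.swap k k' with hu
  set σ := Equiv.swap k k' with hσ
  have hkn : (k : ℕ) + 1 < n := by have := k'.is_lt; omega
  have hkne : k ≠ k' := fun hc => by have := congrArg Fin.val hc; omega
  have key : ∀ i : Fin n,
      (rajCode v (σ i) + (if i = k then 1 else 0) ≤
        rajCode u i + (if i = k' then 1 else 0)) ∧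
      (rajCode v (σ i) + (if i = k then 1 else 0) =
        rajCode u i + (if i = k' then 1 else 0) → eps u i = eps v (σ i)) := by
    intro i
    rcases eq_or_ne i k with rfl | h1
    · rw [if_pos rfl, if_neg hkne, hσ, Equiv.swap_apply_left]
      have e2 := lisFrom_right_k hkk hv
      rw [← hσ, ← hu] at e2
      have b1 := one_le_lisFrom v k'
      have b2 := lisFrom_le_card v k'
      simp only [eps, rajCode, e2]
      omega
    rcases eq_or_ne i k' with rfl | h2
    · rw [if_neg h1, if_pos rfl, hσ, Equiv.swap_apply_right]
      have e4 := lisFrom_right_k' hkk hv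
      have e5 := lisFrom_right_k5 hkk hv
      rw [← hσ, ← hu] at e4 e5
      have b1 := one_le_lisFrom v k
      have b2 := lisFrom_le_card v k
      have b3 := one_le_lisFrom u i
      have b4 := lisFrom_le_card u i
      simp only [eps, rajCode]
      omega
    · rw [if_neg h1, if_neg h2, hσ, Equiv.swap_apply_of_ne_of_ne h1 h2]
      have e1 := lisFrom_right_le hkk hv i h1 h2
      rw [← hu] at e1
      have b1 := one_le_lisFrom v i
      have b2 := lisFrom_le_card v i
      have b3 := one_le_lisFrom u i
      have b4 := lisFrom_le_card u i
      simp only [eps, rajCode]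
      omega
  have hsum1 : ∑ i : Fin n, (rajCode v (σ i) + (if i = k then 1 else 0)) = raj v + 1 := by
    rw [Finset.sum_add_distrib, Equiv.sum_comp σ (rajCode v)]
    simp [raj, Finset.sum_ite_eq']
  have hsum2 : ∑ i : Fin n, (rajCode u i + (if i = k' then 1 else 0)) = raj u + 1 := by
    rw [Finset.sum_add_distrib]
    simp [raj, Finset.sum_ite_eq']
  have hle : raj v + 1 ≤ raj u + 1 := by
    rw [← hsum1, ← hsum2]
    exact Finset.sum_le_sum fun i _ => (key i).1
  refine ⟨by omega, fun heq => ?_⟩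
  have hsums : ∑ i : Fin n, (rajCode v (σ i) + (if i = k then 1 else 0)) =
      ∑ i : Fin n, (rajCode u i + (if i = k' then 1 else 0)) := by
    rw [hsum1, hsum2, heq]
  have hpt := (Finset.sum_eq_sum_iff_of_le fun i _ => (key i).1).1 hsums
  have heps : ∀ i, eps u i = eps v (σ i) := fun i =>
    (key i).2 (hpt i (Finset.mem_univ i))
  exact (shape_eq_of_eps σ heps).symm

lemma good_left {v : Equiv.Perm (Fin n)} {k k' : Fin n}
    (hkk : (k' : ℕ) = (k : ℕ) + 1) (hp : v⁻¹ k < v⁻¹ k') :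
    Good v (Equiv.swap k k' * v) := by
  set u := Equiv.swap k k' * v with hu
  have huv : ∀ m, u m = Equiv.swap k k' (v m) := fun m => rfl
  have hvu : ∀ m, v m = Equiv.swap k k' (u m) := fun m => by
    rw [huv, Equiv.swap_apply_self]
  have hLi : ∀ i, lisFrom u i ≤ lisFrom v i := by
    intro i
    apply lisFrom_le
    intro s hh1 hh2 hh3
    refine le_lisFrom v i s hh1 hh2 ?_
    intro j hj l hl hjl
    have hul := hh3 j hj l hl hjl
    rw [hvu j, hvu l]
    refine swap_adj_lt hkk hul ?_
    rintro ⟨e1, e2⟩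
    have hvj : v j = k' := by
      apply (Equiv.swap k k').injective
      rw [← huv, e1, Equiv.swap_apply_right]
    have hvl : v l = k := by
      apply (Equiv.swap k k').injective
      rw [← huv, e2, Equiv.swap_apply_left]
    have hj' : j = v⁻¹ k' := by rw [← hvj, show v⁻¹ (v j) = j by simp]
    have hl' : l = v⁻¹ k := by rw [← hvl, show v⁻¹ (v l) = l by simp]
    rw [hj', hl'] at hjl
    exact absurd hjl (asymm hp)
  have key : ∀ i : Fin n, rajCode v i ≤ rajCode u i := by
    intro i
    exact Nat.sub_le_sub_left (hLi i) _
  have hle : raj v ≤ raj u := Finset.sum_le_sum fun i _ => key i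
  refine ⟨hle, fun heq => ?_⟩
  have hpt := (Finset.sum_eq_sum_iff_of_le fun i _ => key i).1 heq
  have heps : ∀ i, eps u i = eps v ((1 : Equiv.Perm (Fin n)) i) := by
    intro i
    rw [Equiv.Perm.one_apply]
    unfold eps
    rw [hpt i (Finset.mem_univ i)]
  exact (shape_eq_of_eps 1 heps).symm

lemma good_mul_right : ∀ N : ℕ, ∀ a c : Equiv.Perm (Fin n), invNum c ≤ N →
    invNum (a * c) = invNum a + invNum c → Good a (a * c) := by
  intro N
  induction N with
  | zero =>
    intro a c hc _
    have : c = 1 := eq_one_of_invNum_eq_zero c (Nat.le_zero.1 hc)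
    subst this
    rw [mul_one]
    exact good_refl a
  | succ N ih =>
    intro a c hc hinv
    by_cases h1 : c = 1
    · subst h1; rw [mul_one]; exact good_refl a
    · have hcinv : c⁻¹ ≠ 1 := fun hc' => h1 (by rw [← inv_inv c, hc', inv_one])
      obtain ⟨k, hk, hd⟩ := exists_descent c⁻¹ hcinv
      set k' : Fin n := ⟨(k : ℕ) + 1, hk⟩ with hk'def
      have hkk : (k' : ℕ) = (k : ℕ) + 1 := rfl
      set c'' := Equiv.swap k k' * c with hc''
      have hinvc : invNum c'' + 1 = invNum c := by
        have e1 : c''⁻¹ = c⁻¹ * Equiv.swap k k' := by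
          rw [hc'', mul_inv_rev, Equiv.swap_inv]
        have e2 := invNum_mul_swap' hkk c⁻¹ hd
        rw [← e1] at e2
        rw [← invNum_inv c'', ← invNum_inv c]
        exact e2
      have hcs : c = Equiv.swap k k' * c'' := by
        rw [hc'', ← mul_assoc, Equiv.swap_mul_self, one_mul]
      have hassoc : a * c = (a * Equiv.swap k k') * c'' := by
        rw [hcs, ← mul_assoc]
      have htri : invNum (a * c) ≤ invNum (a * Equiv.swap k k') + invNum c'' := by
        rw [hassoc]; exact invNum_mul_le _ _
      have hswap_lt : a k < a k' := by
        rcases lt_trichotomy (a k) (a k') with h' | h' | h'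
        · exact h'
        · exact absurd (a.injective h')
            (fun hc' => by have := congrArg Fin.val hc'; omega)
        · exfalso
          have := invNum_mul_swap' hkk a h'
          omega
      have hstep : invNum (a * Equiv.swap k k') = invNum a + 1 :=
        invNum_mul_swap hkk a hswap_lt
      have hrest : invNum ((a * Equiv.swap k k') * c'') =
          invNum (a * Equiv.swap k k') + invNum c'' := by
        rw [← hassoc]; omega
      have g1 : Good a (a * Equiv.swap k k') := good_right hkk hswap_lt
      have g2 := ih (a * Equiv.swap k k') c'' (by omega) hrest
      rw [hassoc]
      exact good_trans g1 g2

lemma good_mul_left : ∀ N : ℕ, ∀ c a : Equiv.Perm (Fin n), invNum c ≤ N →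
    invNum (c * a) = invNum c + invNum a → Good a (c * a) := by
  intro N
  induction N with
  | zero =>
    intro c a hc _
    have : c = 1 := eq_one_of_invNum_eq_zero c (Nat.le_zero.1 hc)
    subst this
    rw [one_mul]
    exact good_refl a
  | succ N ih =>
    intro c a hc hinv
    by_cases h1 : c = 1
    · subst h1; rw [one_mul]; exact good_refl a
    · obtain ⟨k, hk, hd⟩ := exists_descent c h1
      set k' : Fin n := ⟨(k : ℕ) + 1, hk⟩ with hk'def
      have hkk : (k' : ℕ) = (k : ℕ) + 1 := rfl
      set c'' := c * Equiv.swap k k' with hc''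
      have hinvc : invNum c'' + 1 = invNum c := invNum_mul_swap' hkk c hd
      have hcs : c = c'' * Equiv.swap k k' := by
        rw [hc'', mul_assoc, Equiv.swap_mul_self, mul_one]
      have hassoc : c * a = c'' * (Equiv.swap k k' * a) := by
        rw [hcs, mul_assoc]
      have htri : invNum (c * a) ≤ invNum c'' + invNum (Equiv.swap k k' * a) := by
        rw [hassoc]; exact invNum_mul_le _ _
      have hswinv : (Equiv.swap k k' * a)⁻¹ = a⁻¹ * Equiv.swap k k' := by
        rw [mul_inv_rev, Equiv.swap_inv]
      have hp : a⁻¹ k < a⁻¹ k' := by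
        rcases lt_trichotomy (a⁻¹ k) (a⁻¹ k')  with h' | h' | h'
        · exact h'
        · exact absurd (a⁻¹.injective h')
            (fun hc' => by have := congrArg Fin.val hc'; omega)
        · exfalso
          have e1 := invNum_mul_swap' hkk a⁻¹ h'
          have e2 : invNum (Equiv.swap k k' * a) = invNum (a⁻¹ * Equiv.swap k k') := by
            rw [← hswinv, invNum_inv]
          have e3 := invNum_inv a
          omega
      have hstep : invNum (Equiv.swap k k' * a) = invNum a + 1 := by
        rw [← invNum_inv (Equiv.swap k k' * a), hswinv,
          invNum_mul_swap hkk a⁻¹ hp, invNum_inv]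
      have hrest : invNum (c'' * (Equiv.swap k k' * a)) =
          invNum c'' + invNum (Equiv.swap k k' * a) := by
        rw [← hassoc]; omega
      have g1 : Good a (Equiv.swap k k' * a) := good_left hkk hp
      have g2 := ih c'' (Equiv.swap k k' * a) (by omega) hrest
      rw [hassoc]
      exact good_trans g1 g2

lemma good_of_step {a b : Equiv.Perm (Fin n)} (h : leL a b ∨ leR a b) : Good a b := by
  rcases h with ⟨c, rfl, hinv⟩ | ⟨c, rfl, hinv⟩
  · exact good_mul_left (invNum c) c a le_rfl hinv
  · exact good_mul_right (invNum c) a c le_rfl hinv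

lemma good_of_leLR {a b : Equiv.Perm (Fin n)} (h : leLR a b) : Good a b := by
  unfold leLR at h
  induction h with
  | refl => exact good_refl a
  | tail hab hbc ih => exact good_trans ih (good_of_step hbc)

end Covers

/-- If `v ≤_{LR} u` in two-sided weak order then `raj(v) ≤ raj(u)`, with
equality iff `u` and `v` have the same shape. -/
theorem raj_mono_leLR (n : ℕ) (u v : Equiv.Perm (Fin n)) (h : leLR v u) :
    raj v ≤ raj u ∧ (raj v = raj u ↔ shape v = shape u) := by
  have hgood : Good v u := good_of_leLR h
  exact ⟨hgood.1, ⟨hgood.2, fun hsh => raj_eq_of_shape_eq hsh⟩⟩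

end RajRegularity
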